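/- Let 𝕜 be a field, V and W vector spaces over 𝕜, u : Fin m → V and w : Fin n → W linearly independent families, and C an m × n matrix over 𝕜. Set v := Σ_{i,j} C_{i j} • (u_i ⊗ w_j) ∈ V ⊗ W. Then dim U_V(v) = rank C and dim U_W(v) = rank Cᵀ; in particular dim U_V(v) = dim U_W(v). -/

import Mathlib

open scoped TensorProduct

section
variable (𝕜 : Type*) [Field 𝕜]

/-- The contraction `id_V ⊗ φ : V ⊗ W → V`, sending `x ⊗ y` to `φ(y) • x`. -/
noncomputable def rContract (V W : Type*) [AddCommGroup V] [Module 𝕜 V]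
    [AddCommGroup W] [Module 𝕜 W] (φ : W →ₗ[𝕜] 𝕜) : V ⊗[𝕜] W →ₗ[𝕜] V :=
  (TensorProduct.rid 𝕜 V).toLinearMap ∘ₗ TensorProduct.map LinearMap.id φ

/-- The contraction `ψ ⊗ id_W : V ⊗ W → W`, sending `x ⊗ y` to `ψ(x) • y`. -/
noncomputable def lContract (V W : Type*) [AddCommGroup V] [Module 𝕜 V]
    [AddCommGroup W] [Module 𝕜 W] (ψ : V →ₗ[𝕜] 𝕜) : V ⊗[𝕜] W →ₗ[𝕜] W :=
  (TensorProduct.lid 𝕜 W).toLinearMap ∘ₗ TensorProduct.map ψ LinearMap.id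

/-- The left minimal subspace `U_V(v)` of `v ∈ V ⊗ W`: the span of all contractions
`(id_V ⊗ φ)(v)` with `φ` in the algebraic dual of `W`. -/
noncomputable def leftMin (V W : Type*) [AddCommGroup V] [Module 𝕜 V]
    [AddCommGroup W] [Module 𝕜 W] (v : V ⊗[𝕜] W) : Submodule 𝕜 V :=
  Submodule.span 𝕜 {x | ∃ φ : W →ₗ[𝕜] 𝕜, rContract 𝕜 V W φ v = x}

/-- The right minimal subspace `U_W(v)` of `v ∈ V ⊗ W`: the span of all contractions
`(ψ ⊗ id_W)(v)` with `ψ` in the algebraic dual of `V`. -/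
noncomputable def rightMin (V W : Type*) [AddCommGroup V] [Module 𝕜 V]
    [AddCommGroup W] [Module 𝕜 W] (v : V ⊗[𝕜] W) : Submodule 𝕜 W :=
  Submodule.span 𝕜 {y | ∃ ψ : V →ₗ[𝕜] 𝕜, lContract 𝕜 V W ψ v = y}

end

section
variable {𝕜 V W : Type*} [Field 𝕜] [AddCommGroup V] [Module 𝕜 V]
  [AddCommGroup W] [Module 𝕜 W]

/-- **Dimensions of minimal subspaces and matrix rank.**
If `v = ∑ i j, C i j • (u i ⊗ w j)` with `u`, `w` linearly independent families, then
`dim U_V(v) = rank C`, `dim U_W(v) = rank C.transpose`, and in particular the two dimensions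
agree. -/
lemma exists_dual_family {𝕜 M : Type*} [Field 𝕜] [AddCommGroup M] [Module 𝕜 M]
    {k : ℕ} {x : Fin k → M} (hx : LinearIndependent 𝕜 x) (c : Fin k → 𝕜) :
    ∃ φ : M →ₗ[𝕜] 𝕜, ∀ i, φ (x i) = c i := by
  let b := Module.Basis.span hx
  obtain ⟨g, hg⟩ := LinearMap.exists_extend (b.constr 𝕜 c)
  refine ⟨g, fun i => ?_⟩
  have : x i = ((Submodule.span 𝕜 (Set.range x)).subtype) (b i) := by
    simp [b, Module.Basis.span_apply]
  rw [this, ← LinearMap.comp_apply, hg, Module.Basis.constr_basis]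

/-- **Dimensions of minimal subspaces and matrix rank.**
If `v = ∑ i j, C i j • (u i ⊗ w j)` with `u`, `w` linearly independent families, then
`dim U_V(v) = rank C`, `dim U_W(v) = rank Cᵀ`, and in particular the two dimensions
agree. -/
theorem finrank_minimal_subspaces_eq_matrix_rank {m n : ℕ}
    (u : Fin m → V) (w : Fin n → W)
    (hu : LinearIndependent 𝕜 u) (hw : LinearIndependent 𝕜 w)
    (C : Matrix (Fin m) (Fin n) 𝕜) :
    Module.finrank 𝕜 (leftMin 𝕜 V W (∑ i, ∑ j, C i j • (u i ⊗ₜ[𝕜] w j))) = C.rank ∧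
    Module.finrank 𝕜 (rightMin 𝕜 V W (∑ i, ∑ j, C i j • (u i ⊗ₜ[𝕜] w j)))
      = C.transpose.rank ∧
    Module.finrank 𝕜 (leftMin 𝕜 V W (∑ i, ∑ j, C i j • (u i ⊗ₜ[𝕜] w j)))
      = Module.finrank 𝕜 (rightMin 𝕜 V W (∑ i, ∑ j, C i j • (u i ⊗ₜ[𝕜] w j))) := by
  set v := ∑ i, ∑ j, C i j • (u i ⊗ₜ[𝕜] w j) with hv
  -- abbreviations
  set F : (Fin m → 𝕜) →ₗ[𝕜] V := Fintype.linearCombination 𝕜 u with hF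
  set G : (Fin n → 𝕜) →ₗ[𝕜] W := Fintype.linearCombination 𝕜 w with hG
  have hFinj : Function.Injective F := by
    rw [← LinearMap.ker_eq_bot, LinearMap.ker_eq_bot']
    intro c hc
    funext i
    exact Fintype.linearIndependent_iff.mp hu c
      (by simpa [hF, Fintype.linearCombination_apply] using hc) i
  have hGinj : Function.Injective G := by
    rw [← LinearMap.ker_eq_bot, LinearMap.ker_eq_bot']
    intro c hc
    funext j
    exact Fintype.linearIndependent_iff.mp hw c
      (by simpa [hG, Fintype.linearCombination_apply] using hc) j
  -- contraction formulas
  have hrC : ∀ φ : W →ₗ[𝕜] 𝕜, rContract 𝕜 V W φ v = F (C.mulVec (fun j => φ (w j))) := by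
    intro φ
    simp only [hv, hF, map_sum, map_smul, rContract, LinearMap.comp_apply,
      TensorProduct.map_tmul, LinearMap.id_coe, id_eq, LinearEquiv.coe_coe,
      TensorProduct.rid_tmul, Fintype.linearCombination_apply, Matrix.mulVec,
      dotProduct]
    simp [Finset.sum_smul, smul_smul]
  have hlC : ∀ ψ : V →ₗ[𝕜] 𝕜, lContract 𝕜 V W ψ v = G (C.transpose.mulVec (fun i => ψ (u i))) := by
    intro ψ
    simp only [hv, hG, map_sum, map_smul, lContract, LinearMap.comp_apply,
      TensorProduct.map_tmul, LinearMap.id_coe, id_eq, LinearEquiv.coe_coe,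
      TensorProduct.lid_tmul, Fintype.linearCombination_apply, Matrix.mulVec,
      dotProduct, Matrix.transpose_apply]
    rw [Finset.sum_comm]
    simp [Finset.sum_smul, smul_smul, mul_comm]
  -- left minimal subspace
  have hleft : leftMin 𝕜 V W v = Submodule.map F (LinearMap.range C.mulVecLin) := by
    rw [leftMin]
    have hset : {x | ∃ φ : W →ₗ[𝕜] 𝕜, rContract 𝕜 V W φ v = x}
        = F '' (LinearMap.range C.mulVecLin : Set (Fin m → 𝕜)) := by
      ext x
      constructor
      · rintro ⟨φ, rfl⟩
        exact ⟨C.mulVec (fun j => φ (w j)), ⟨_, rfl⟩, (hrC φ).symm⟩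
      · rintro ⟨y, ⟨c, rfl⟩, rfl⟩
        obtain ⟨φ, hφ⟩ := exists_dual_family hw c
        refine ⟨φ, ?_⟩
        rw [hrC φ, Matrix.mulVecLin_apply]
        exact congrArg F (congrArg C.mulVec (funext hφ))
    rw [hset, ← Submodule.map_span, Submodule.span_eq]
  have hright : rightMin 𝕜 V W v = Submodule.map G (LinearMap.range C.transpose.mulVecLin) := by
    rw [rightMin]
    have hset : {y | ∃ ψ : V →ₗ[𝕜] 𝕜, lContract 𝕜 V W ψ v = y}
        = G '' (LinearMap.range C.transpose.mulVecLin : Set (Fin n → 𝕜)) := by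
      ext y
      constructor
      · rintro ⟨ψ, rfl⟩
        exact ⟨C.transpose.mulVec (fun i => ψ (u i)), ⟨_, rfl⟩, (hlC ψ).symm⟩
      · rintro ⟨z, ⟨c, rfl⟩, rfl⟩
        obtain ⟨ψ, hψ⟩ := exists_dual_family hu c
        refine ⟨ψ, ?_⟩
        rw [hlC ψ, Matrix.mulVecLin_apply]
        exact congrArg G (congrArg C.transpose.mulVec (funext hψ))
    rw [hset, ← Submodule.map_span, Submodule.span_eq]
  have h1 : Module.finrank 𝕜 (leftMin 𝕜 V W v) = C.rank := by
    rw [hleft, Matrix.rank]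
    exact ((Submodule.equivMapOfInjective F hFinj _).symm).finrank_eq
  have h2 : Module.finrank 𝕜 (rightMin 𝕜 V W v) = C.transpose.rank := by
    rw [hright, Matrix.rank]
    exact ((Submodule.equivMapOfInjective G hGinj _).symm).finrank_eq
  exact ⟨h1, h2, by rw [h1, h2, Matrix.rank_transpose]⟩

end
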